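/- arXiv:2409.14397 — 2 statements merged into one kernel-verified Lean document; each statement's English description precedes it below -/
import Mathlib

section
/- Let M ∈ R^{d_1×d_2} with ‖M‖_F = 1, and let a ∈ R^{d_1}, b ∈ R^{d_2} be unit vectors. Let â be a top left singular vector of M. Then min(‖â â^T − a a^T‖_2^2, 1/2) ≤ ‖vec(M) vec(M)^T − vec(a b^T) vec(a b^T)^T‖_2^2. -/
open Matrix
open scoped RealInnerProductSpace

noncomputable def specNorm {m n : Type*} [Fintype m] [Fintype n] [DecidableEq n]
    (A : Matrix m n ℝ) : ℝ :=
  ‖LinearMap.toContinuousLinearMap (Matrix.toEuclideanLin A)‖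

lemma specNorm_nonneg {m n : Type*} [Fintype m] [Fintype n] [DecidableEq n]
    (A : Matrix m n ℝ) : 0 ≤ specNorm A := norm_nonneg _

lemma euclid_norm_eq {n : Type*} [Fintype n] (x : EuclideanSpace ℝ n) :
    ‖x‖ = Real.sqrt (∑ i, (x i) ^ 2) := by
  rw [EuclideanSpace.norm_eq]
  simp [Real.norm_eq_abs, sq_abs]

lemma specNorm_le {m n : Type*} [Fintype m] [Fintype n] [DecidableEq n]
    (A : Matrix m n ℝ) (C : ℝ) (hC : 0 ≤ C)
    (h : ∀ w : n → ℝ, ∑ i, (A.mulVec w i) ^ 2 ≤ C ^ 2 * ∑ j, (w j) ^ 2) :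
    specNorm A ≤ C := by
  apply ContinuousLinearMap.opNorm_le_bound _ hC
  intro x
  have h1 : ‖(LinearMap.toContinuousLinearMap (Matrix.toEuclideanLin A)) x‖
      = Real.sqrt (∑ i, (A.mulVec (fun j => x j) i) ^ 2) := by
    rw [euclid_norm_eq]
    rfl
  rw [h1, euclid_norm_eq]
  have : C * Real.sqrt (∑ i, (x i) ^ 2) = Real.sqrt (C ^ 2 * ∑ i, (x i) ^ 2) := by
    rw [Real.sqrt_mul (sq_nonneg C), Real.sqrt_sq hC]
  rw [this]
  exact Real.sqrt_le_sqrt (h fun j => x j)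

lemma le_specNorm {m n : Type*} [Fintype m] [Fintype n] [DecidableEq n]
    (A : Matrix m n ℝ) (w : n → ℝ) :
    Real.sqrt (∑ i, (A.mulVec w i) ^ 2)
      ≤ specNorm A * Real.sqrt (∑ j, (w j) ^ 2) := by
  have h := (LinearMap.toContinuousLinearMap (Matrix.toEuclideanLin A)).le_opNorm
      ((WithLp.equiv 2 (n → ℝ)).symm w)
  have h1 : ‖(LinearMap.toContinuousLinearMap (Matrix.toEuclideanLin A))
      ((WithLp.equiv 2 (n → ℝ)).symm w)‖ = Real.sqrt (∑ i, (A.mulVec w i) ^ 2) := by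
    rw [euclid_norm_eq]; rfl
  have h2 : ‖(WithLp.equiv 2 (n → ℝ)).symm w‖ = Real.sqrt (∑ j, (w j) ^ 2) := by
    rw [euclid_norm_eq]; rfl
  rw [h1, h2] at h
  exact h

lemma rayleigh_aux {n : ℕ} (B : Matrix (Fin n) (Fin n) ℝ) (hB : B.IsHermitian) (μ : ℝ)
    (hmax : ∀ (ν : ℝ) (x : Fin n → ℝ), x ≠ 0 → B.mulVec x = ν • x → ν ≤ μ)
    (x : Fin n → ℝ) (hx : ∑ i, x i ^ 2 = 1) :
    x ⬝ᵥ B.mulVec x ≤ μ := by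
  set V := hB.eigenvectorBasis with hV
  have hBt : Bᵀ = B := by
    rw [← Matrix.conjTranspose_eq_transpose_of_trivial]; exact hB
  have hVne : ∀ i, (⇑(V i) : Fin n → ℝ) ≠ 0 := by
    intro i h
    have h1 : ‖V i‖ = 1 := V.orthonormal.1 i
    have h0 : (V i : EuclideanSpace ℝ (Fin n)) = 0 := by
      ext j; exact congrFun h j
    rw [h0] at h1; simp at h1
  have hν : ∀ i, hB.eigenvalues i ≤ μ := fun i =>
    hmax _ _ (hVne i) (hB.mulVec_eigenvectorBasis i)
  set xe : EuclideanSpace ℝ (Fin n) := (WithLp.equiv 2 (Fin n → ℝ)).symm x with hxe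
  set ye : EuclideanSpace ℝ (Fin n) := (WithLp.equiv 2 (Fin n → ℝ)).symm (B.mulVec x) with hye
  have hsym : ∀ i, (⟪V i, ye⟫ : ℝ) = hB.eigenvalues i * ⟪V i, xe⟫ := by
    intro i
    have e1 : (⟪V i, ye⟫ : ℝ) = (⇑(V i) : Fin n → ℝ) ⬝ᵥ B.mulVec x := by
      simp [PiLp.inner_apply, RCLike.inner_apply, dotProduct, hye]
      exact Finset.sum_congr rfl fun _ _ => mul_comm _ _
    have e2 : (⇑(V i) : Fin n → ℝ) ⬝ᵥ B.mulVec x = (B.mulVec (⇑(V i))) ⬝ᵥ x := by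
      rw [Matrix.dotProduct_mulVec, ← Matrix.mulVec_transpose, hBt]
    have e3 : (B.mulVec (⇑(V i))) ⬝ᵥ x = hB.eigenvalues i * ((⇑(V i) : Fin n → ℝ) ⬝ᵥ x) := by
      rw [hB.mulVec_eigenvectorBasis i, smul_dotProduct]
      rfl
    have e4 : ((⇑(V i) : Fin n → ℝ) ⬝ᵥ x) = ⟪V i, xe⟫ := by
      simp [PiLp.inner_apply, RCLike.inner_apply, dotProduct, hxe]
      exact Finset.sum_congr rfl fun _ _ => mul_comm _ _
    rw [e1, e2, e3, e4]
  have key1 : (∑ i, ⟪xe, V i⟫ * ⟪V i, xe⟫) = 1 := by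
    rw [V.sum_inner_mul_inner xe xe]
    simp [PiLp.inner_apply, RCLike.inner_apply, hxe, ← pow_two]
    left; rw [euclid_norm_eq]; simp [hx]
  have key2 : x ⬝ᵥ B.mulVec x = ∑ i, ⟪xe, V i⟫ * ⟪V i, ye⟫ := by
    rw [V.sum_inner_mul_inner xe ye]
    simp [PiLp.inner_apply, RCLike.inner_apply, dotProduct, hxe, hye]
    exact Finset.sum_congr rfl fun _ _ => mul_comm _ _
  have hcomm : ∀ i, (⟪xe, V i⟫ : ℝ) = ⟪V i, xe⟫ := fun i => real_inner_comm _ _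
  calc x ⬝ᵥ B.mulVec x = ∑ i, hB.eigenvalues i * (⟪V i, xe⟫) ^ 2 := by
        rw [key2]; apply Finset.sum_congr rfl; intro i _
        rw [hsym i, hcomm i]; ring
    _ ≤ ∑ i, μ * (⟪V i, xe⟫) ^ 2 := by
        apply Finset.sum_le_sum; intro i _
        exact mul_le_mul_of_nonneg_right (hν i) (sq_nonneg _)
    _ = μ := by
        rw [← Finset.mul_sum]
        have : (∑ i, (⟪V i, xe⟫ : ℝ) ^ 2) = 1 := by
          rw [← key1]; apply Finset.sum_congr rfl; intro i _; rw [hcomm i]; ring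
        rw [this, mul_one]

lemma diff_mulVec {n : Type*} [Fintype n] [DecidableEq n] (x y w : n → ℝ) (i : n) :
    ((vecMulVec x x - vecMulVec y y).mulVec w) i
      = x i * (∑ j, x j * w j) - y i * (∑ j, y j * w j) := by
  simp only [Matrix.sub_mulVec, Pi.sub_apply, Matrix.sub_apply, Matrix.mulVec, dotProduct,
    vecMulVec_apply, Finset.mul_sum]
  rw [← Finset.sum_sub_distrib]
  exact Finset.sum_congr rfl fun k _ => by ring

lemma sum_expand2 {ι : Type*} [Fintype ι] (x y : ι → ℝ) (α β : ℝ) :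
    ∑ i, (α * x i + β * y i) ^ 2
      = α ^ 2 * ∑ i, x i ^ 2 + 2 * α * β * ∑ i, x i * y i + β ^ 2 * ∑ i, y i ^ 2 := by
  rw [Finset.mul_sum, Finset.mul_sum, Finset.mul_sum, ← Finset.sum_add_distrib,
    ← Finset.sum_add_distrib]
  exact Finset.sum_congr rfl fun i _ => by ring

lemma sum_expand3 {ι : Type*} [Fintype ι] (x y w : ι → ℝ) (α β γ : ℝ) :
    ∑ i, (α * x i + β * y i + γ * w i) ^ 2
      = α ^ 2 * ∑ i, x i ^ 2 + β ^ 2 * ∑ i, y i ^ 2 + γ ^ 2 * ∑ i, w i ^ 2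
        + 2 * α * β * ∑ i, x i * y i + 2 * α * γ * ∑ i, x i * w i
        + 2 * β * γ * ∑ i, y i * w i := by
  simp only [Finset.mul_sum, ← Finset.sum_add_distrib]
  exact Finset.sum_congr rfl fun i _ => by ring

set_option maxHeartbeats 1000000

theorem stmt3 (d₁ d₂ : ℕ)
    (Mmat : Matrix (Fin d₁) (Fin d₂) ℝ)
    (hMF : Real.sqrt (∑ i, ∑ j, (Mmat i j) ^ 2) = 1)
    (a : Fin d₁ → ℝ) (b : Fin d₂ → ℝ)
    (ha : ∑ i, (a i) ^ 2 = 1) (hb : ∑ j, (b j) ^ 2 = 1)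
    (ahat : Fin d₁ → ℝ) (hahat : ∑ i, (ahat i) ^ 2 = 1)
    (μ : ℝ) (heig : (Mmat * Mmatᵀ).mulVec ahat = μ • ahat)
    (hmax : ∀ (ν : ℝ) (x : Fin d₁ → ℝ), x ≠ 0 → (Mmat * Mmatᵀ).mulVec x = ν • x → ν ≤ μ)
    (vM vab : Fin d₁ × Fin d₂ → ℝ)
    (hvM : ∀ p, vM p = Mmat p.1 p.2) (hvab : ∀ p, vab p = a p.1 * b p.2) :
    min (specNorm (vecMulVec ahat ahat - vecMulVec a a) ^ 2) (1 / 2)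
      ≤ specNorm (vecMulVec vM vM - vecMulVec vab vab) ^ 2 := by
  have hFM : (∑ i, ∑ j, (Mmat i j) ^ 2) = 1 := by
    have h0 : (0:ℝ) ≤ ∑ i, ∑ j, (Mmat i j) ^ 2 := by positivity
    have := Real.sq_sqrt h0
    rw [hMF] at this; linarith
  set t : ℝ := ∑ i, ∑ j, Mmat i j * (a i * b j) with htdef
  set c : ℝ := ∑ i, ahat i * a i with hcdef
  have hvMsq : ∑ p, vM p ^ 2 = 1 := by
    simp only [hvM]
    rw [Fintype.sum_prod_type]; exact hFM
  have hvabsq : ∑ p, vab p ^ 2 = 1 := by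
    simp only [hvab]
    rw [Fintype.sum_prod_type]
    have e : ∀ i : Fin d₁, (∑ j, (a i * b j) ^ 2) = a i ^ 2 := fun i => by
      simp only [mul_pow, ← Finset.mul_sum, hb, mul_one]
    rw [Finset.sum_congr rfl fun i _ => e i, ha]
  have hdot : ∑ p, vM p * vab p = t := by
    simp only [hvM, hvab, htdef]
    rw [Fintype.sum_prod_type]
  have ht2le : t ^ 2 ≤ 1 := by
    have h := Finset.sum_mul_sq_le_sq_mul_sq Finset.univ vM vab
    rw [hvMsq, hvabsq, hdot] at h
    linarith
  have hRHS : 1 - t ^ 2 ≤ specNorm (vecMulVec vM vM - vecMulVec vab vab) ^ 2 := by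
    set A₂ := vecMulVec vM vM - vecMulVec vab vab with hA2
    have hmul : ∀ p, A₂.mulVec vM p = 1 * vM p + (-t) * vab p := by
      intro p
      rw [hA2, diff_mulVec]
      have e1 : ∑ q, vM q * vM q = 1 := by
        rw [← hvMsq]; exact Finset.sum_congr rfl fun q _ => (pow_two _).symm
      have e2 : ∑ q, vab q * vM q = t := by
        rw [← hdot]; exact Finset.sum_congr rfl fun q _ => mul_comm _ _
      rw [e1, e2]; ring
    have hsum2 : ∑ p, (A₂.mulVec vM p) ^ 2 = 1 - t ^ 2 := by
      rw [Finset.sum_congr rfl fun p _ => congrArg (· ^ 2) (hmul p), sum_expand2]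
      rw [hvMsq, hdot, hvabsq]; ring
    have h := le_specNorm A₂ vM
    rw [hsum2, hvMsq, Real.sqrt_one, mul_one] at h
    have h0 : (0:ℝ) ≤ 1 - t ^ 2 := by linarith
    calc 1 - t ^ 2 = Real.sqrt (1 - t ^ 2) ^ 2 := (Real.sq_sqrt h0).symm
      _ ≤ specNorm A₂ ^ 2 := pow_le_pow_left₀ (Real.sqrt_nonneg _) h 2
  have hc2le : c ^ 2 ≤ 1 := by
    have h := Finset.sum_mul_sq_le_sq_mul_sq Finset.univ ahat a
    rw [hahat, ha, ← hcdef] at h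
    linarith
  set A₁ := vecMulVec ahat ahat - vecMulVec a a with hA1
  rcases eq_or_lt_of_le hc2le with hc1 | hclt
  · -- c² = 1 : the matrix A₁ is zero
    have e2 : ∑ i, a i * ahat i = c := by
      rw [hcdef]; exact Finset.sum_congr rfl fun i _ => mul_comm _ _
    have hsumr : ∑ i, (a i - c * ahat i) ^ 2 = 0 := by
      have e : ∀ i, (a i - c * ahat i) ^ 2 = (1 * a i + (-c) * ahat i) ^ 2 := fun i => by ring
      rw [Finset.sum_congr rfl fun i _ => e i, sum_expand2, ha, hahat, e2]
      nlinarith [hc1]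
    have hai : ∀ i, a i = c * ahat i := by
      intro i
      have h1 := (Finset.sum_eq_zero_iff_of_nonneg
        (fun i _ => sq_nonneg (a i - c * ahat i))).1 hsumr i (Finset.mem_univ i)
      have h2 : a i - c * ahat i = 0 := by
        have := sq_eq_zero_iff.1 h1
        exact this
      linarith
    have hA10 : A₁ = 0 := by
      rw [hA1]
      ext i j
      simp only [Matrix.sub_apply, vecMulVec_apply, Matrix.zero_apply, hai]
      linear_combination (-(ahat i * ahat j)) * hc1
    rw [hA10]
    have hz : specNorm (0 : Matrix (Fin d₁) (Fin d₁) ℝ) = 0 := by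
      unfold specNorm
      rw [map_zero, map_zero, norm_zero]
    calc min (specNorm (0 : Matrix (Fin d₁) (Fin d₁) ℝ) ^ 2) (1/2) ≤ 0 := by
          rw [hz]; simp
      _ ≤ _ := sq_nonneg _
  · -- c² < 1
    have hLHS : specNorm A₁ ^ 2 ≤ 1 - c ^ 2 := by
      have hb1 : specNorm A₁ ≤ Real.sqrt (1 - c ^ 2) := by
        apply specNorm_le _ _ (Real.sqrt_nonneg _)
        intro w
        rw [Real.sq_sqrt (by linarith : (0:ℝ) ≤ 1 - c ^ 2)]
        set P : ℝ := ∑ j, ahat j * w j with hP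
        set Q : ℝ := ∑ j, a j * w j with hQ
        have hw : ∀ i, A₁.mulVec w i = ahat i * P - a i * Q := fun i => by
          rw [hA1, diff_mulVec]
        have e2 : ∑ i, a i * ahat i = c := by
          rw [hcdef]; exact Finset.sum_congr rfl fun i _ => mul_comm _ _
        have hQsum : ∑ i, (A₁.mulVec w i) ^ 2 = P^2 - 2*P*Q*c + Q^2 := by
          have e : ∀ i, (A₁.mulVec w i)^2 = (P * ahat i + (-Q) * a i)^2 := fun i => by
            rw [hw i]; ring
          rw [Finset.sum_congr rfl fun i _ => e i, sum_expand2, hahat, ha]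
          have e3 : ∑ i, ahat i * a i = c := hcdef.symm
          rw [e3]; ring
        have hznn : (0:ℝ) ≤ ∑ i, ((1 - c^2) * w i + (-(P - Q*c)) * ahat i + (-(Q - P*c)) * a i) ^ 2 :=
          Finset.sum_nonneg fun i _ => sq_nonneg _
        have hzsum : ∑ i, ((1 - c^2) * w i + (-(P - Q*c)) * ahat i + (-(Q - P*c)) * a i) ^ 2
            = (1-c^2) * ((1-c^2) * (∑ j, w j ^ 2) - (P^2 - 2*P*Q*c + Q^2)) := by
          rw [sum_expand3, hahat, ha]
          have e1 : ∑ i, w i * ahat i = P := by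
            rw [hP]; exact Finset.sum_congr rfl fun i _ => mul_comm _ _
          have e2' : ∑ i, w i * a i = Q := by
            rw [hQ]; exact Finset.sum_congr rfl fun i _ => mul_comm _ _
          have e3 : ∑ i, ahat i * a i = c := hcdef.symm
          rw [e1, e2', e3]; ring
        have key : (0:ℝ) ≤ (1 - c^2) * ((1 - c^2) * (∑ j, w j ^ 2) - (P^2 - 2*P*Q*c + Q^2)) := by
          rw [← hzsum]; exact hznn
        rw [hQsum]
        nlinarith [key, hclt]
      calc specNorm A₁ ^ 2 ≤ Real.sqrt (1 - c ^ 2) ^ 2 :=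
            pow_le_pow_left₀ (specNorm_nonneg _) hb1 2
        _ = 1 - c ^ 2 := Real.sq_sqrt (by linarith)
    by_cases ht : t ^ 2 ≤ 1/2
    · calc min (specNorm A₁ ^ 2) (1/2) ≤ 1/2 := min_le_right _ _
        _ ≤ 1 - t ^ 2 := by linarith
        _ ≤ _ := hRHS
    · push_neg at ht
      -- the eigenvalue argument: t² ≤ c²
      have hB : (Mmat * Mmatᵀ).IsHermitian := by
        have h := Matrix.isHermitian_mul_conjTranspose_self Mmat
        rwa [Matrix.conjTranspose_eq_transpose_of_trivial] at h
      have hdotB : ∀ x : Fin d₁ → ℝ,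
          x ⬝ᵥ (Mmat * Mmatᵀ).mulVec x = ∑ j, (Mmatᵀ.mulVec x j) ^ 2 := by
        intro x
        rw [← Matrix.mulVec_mulVec, Matrix.dotProduct_mulVec, ← Matrix.mulVec_transpose]
        simp [dotProduct, pow_two]
      set u := Mmatᵀ.mulVec ahat with hu
      have hmuu : μ = ∑ j, u j ^ 2 := by
        have h1 : ahat ⬝ᵥ (Mmat * Mmatᵀ).mulVec ahat = μ := by
          rw [heig]
          have e : ∀ i, ahat i * (μ • ahat) i = μ * ahat i ^ 2 := fun i => by
            simp [Pi.smul_apply, smul_eq_mul]; ring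
          calc ahat ⬝ᵥ (μ • ahat) = ∑ i, ahat i * (μ • ahat) i := rfl
            _ = ∑ i, μ * ahat i ^ 2 := Finset.sum_congr rfl fun i _ => e i
            _ = μ := by rw [← Finset.mul_sum, hahat, mul_one]
        rw [← h1, hdotB]
      have hR : t ^ 2 ≤ a ⬝ᵥ (Mmat * Mmatᵀ).mulVec a := by
        have hg : ∀ j, Mmatᵀ.mulVec a j = ∑ i, Mmat i j * a i := fun j => by
          simp [Matrix.mulVec, dotProduct, Matrix.transpose_apply]
        have htg : t = ∑ j, (Mmatᵀ.mulVec a j) * b j := by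
          rw [htdef, Finset.sum_comm]
          refine Finset.sum_congr rfl fun j _ => ?_
          rw [hg j, Finset.sum_mul]
          exact Finset.sum_congr rfl fun i _ => by ring
        rw [hdotB, htg]
        have h := Finset.sum_mul_sq_le_sq_mul_sq Finset.univ (Mmatᵀ.mulVec a) b
        rw [hb, mul_one] at h
        exact h
      have hRμ : a ⬝ᵥ (Mmat * Mmatᵀ).mulVec a ≤ μ := rayleigh_aux _ hB μ hmax a ha
      have hcolCS : ∀ j, u j ^ 2 ≤ ∑ i, Mmat i j ^ 2 := by
        intro j
        have hgg : u j = ∑ i, Mmat i j * ahat i := by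
          simp [hu, Matrix.mulVec, dotProduct, Matrix.transpose_apply]
        rw [hgg]
        have h := Finset.sum_mul_sq_le_sq_mul_sq Finset.univ (fun i => Mmat i j) ahat
        rw [hahat, mul_one] at h
        exact h
      have hcolsum : ∑ j, ∑ i, Mmat i j ^ 2 = 1 := by rw [Finset.sum_comm]; exact hFM
      have hmu1 : μ ≤ 1 := by
        rw [hmuu]
        calc ∑ j, u j ^ 2 ≤ ∑ j, ∑ i, Mmat i j ^ 2 := Finset.sum_le_sum fun j _ => hcolCS j
          _ = 1 := hcolsum
      set r : Fin d₁ → ℝ := fun i => a i - c * ahat i with hr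
      have hro : ∑ i, ahat i * r i = 0 := by
        have e : ∀ i, ahat i * r i = ahat i * a i - c * (ahat i * ahat i) := fun i => by
          simp only [hr]; ring
        rw [Finset.sum_congr rfl fun i _ => e i, Finset.sum_sub_distrib, ← Finset.mul_sum]
        have e1 : ∑ i, ahat i * ahat i = 1 := by
          rw [← hahat]; exact Finset.sum_congr rfl fun i _ => (pow_two _).symm
        rw [e1, ← hcdef]; ring
      have hrn : ∑ i, r i ^ 2 = 1 - c ^ 2 := by
        have e : ∀ i, r i ^ 2 = (1 * a i + (-c) * ahat i) ^ 2 := fun i => by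
          simp only [hr]; ring
        rw [Finset.sum_congr rfl fun i _ => e i, sum_expand2, ha, hahat]
        have e2 : ∑ i, a i * ahat i = c := by
          rw [hcdef]; exact Finset.sum_congr rfl fun i _ => mul_comm _ _
        rw [e2]; ring
      set s := Mmatᵀ.mulVec r with hs
      have hus : ∑ j, u j * s j = 0 := by
        calc (∑ j, u j * s j) = u ⬝ᵥ (Mmatᵀ.mulVec r) := rfl
          _ = (Mmat.mulVec u) ⬝ᵥ r := by
              rw [Matrix.dotProduct_mulVec, Matrix.vecMul_transpose]
          _ = ((Mmat * Mmatᵀ).mulVec ahat) ⬝ᵥ r := by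
              rw [hu, Matrix.mulVec_mulVec]
          _ = (μ • ahat) ⬝ᵥ r := by rw [heig]
          _ = μ * (ahat ⬝ᵥ r) := smul_dotProduct μ ahat r
          _ = 0 := by
              have : ahat ⬝ᵥ r = 0 := hro
              rw [this, mul_zero]
      have hssum : ∑ j, s j ^ 2 ≤ (1 - μ) * (1 - c ^ 2) := by
        have hper : ∀ j, s j ^ 2 ≤ ((∑ i, Mmat i j ^ 2) - u j ^ 2) * (1 - c ^ 2) := by
          intro j
          have hsj : s j = ∑ i, (Mmat i j - u j * ahat i) * r i := by
            have e : ∀ i, (Mmat i j - u j * ahat i) * r i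
                = Mmat i j * r i - u j * (ahat i * r i) := fun i => by ring
            rw [Finset.sum_congr rfl fun i _ => e i, Finset.sum_sub_distrib, ← Finset.mul_sum,
              hro, mul_zero, sub_zero]
            simp [hs, Matrix.mulVec, dotProduct, Matrix.transpose_apply]
          have hcs := Finset.sum_mul_sq_le_sq_mul_sq Finset.univ
            (fun i => Mmat i j - u j * ahat i) r
          rw [hrn] at hcs
          rw [hsj]
          refine le_trans hcs (mul_le_mul_of_nonneg_right ?_ (by linarith))
          have e : ∀ i, (Mmat i j - u j * ahat i) ^ 2
              = (1 * Mmat i j + (-(u j)) * ahat i) ^ 2 := fun i => by ring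
          rw [Finset.sum_congr rfl fun i _ => e i, sum_expand2, hahat]
          have e2 : ∑ i, Mmat i j * ahat i = u j := by
            simp [hu, Matrix.mulVec, dotProduct, Matrix.transpose_apply, mul_comm]
          rw [e2]
          exact le_of_eq (by ring)
        calc ∑ j, s j ^ 2 ≤ ∑ j, ((∑ i, Mmat i j ^ 2) - u j ^ 2) * (1 - c ^ 2) :=
              Finset.sum_le_sum fun j _ => hper j
          _ = (1 - μ) * (1 - c ^ 2) := by
              rw [← Finset.sum_mul, Finset.sum_sub_distrib, hcolsum, ← hmuu]
      have hstep3 : a ⬝ᵥ (Mmat * Mmatᵀ).mulVec a ≤ μ * c ^ 2 + (1 - μ) * (1 - c ^ 2) := by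
        rw [hdotB]
        have haa : a = c • ahat + r := by
          funext i; simp only [Pi.add_apply, Pi.smul_apply, smul_eq_mul, hr]; ring
        have hdecp : ∀ j, Mmatᵀ.mulVec a j = c * u j + 1 * s j := by
          intro j
          have h1 : Mmatᵀ.mulVec a = c • u + s := by
            rw [haa, Matrix.mulVec_add, Matrix.mulVec_smul]
          rw [h1]
          simp only [Pi.add_apply, Pi.smul_apply, smul_eq_mul]
          ring
        rw [Finset.sum_congr rfl fun j _ => congrArg (· ^ 2) (hdecp j), sum_expand2 u s c 1,
          hus, ← hmuu]
        linarith [hssum]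
      have htc : t ^ 2 ≤ c ^ 2 := by
        clear_value t c u r s A₁
        nlinarith [hR, hRμ, hstep3, hmu1, ht, hc2le, hclt]
      calc min (specNorm A₁ ^ 2) (1/2) ≤ specNorm A₁ ^ 2 := min_le_left _ _
        _ ≤ 1 - c ^ 2 := hLHS
        _ ≤ 1 - t ^ 2 := by linarith
        _ ≤ _ := hRHS
end

section
/- Let r ≤ min(d_1, d_2), let M ∈ R^{d_1×d_2} have r-th largest singular value λ_r, and let U (resp. V) be the d_1×r (resp. d_2×r) matrix of left (resp. right) singular vectors for the top r singular values, with orthonormal complements U_⊥, V_⊥. Let M̂ = M + Δ with corresponding quantities Û, V̂, Û_⊥, V̂_⊥, and let λ̂_{r+1} be the (r+1)-th largest singular value of M̂. Set ε_1 = ‖U^T Δ V̂_⊥‖_2 and ε_2 = ‖Û_⊥^T Δ V‖_2. If λ_r > λ̂_{r+1}, then ‖U_⊥^T Û‖_2 ≤ (λ̂_{r+1} ε_1 + λ_r ε_2)/(λ_r^2 − λ̂_{r+1}^2) ≤ max(ε_1, ε_2)/(λ_r − λ̂_{r+1}). -/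
open Matrix

/-- `U` has orthonormal columns, `W` has orthonormal columns, the columns of `U` and `W`
are mutually orthogonal, and together they span the whole space. -/
def OrthoPair {n k : ℕ} (U : Matrix (Fin n) (Fin k) ℝ)
    (W : Matrix (Fin n) (Fin (n - k)) ℝ) : Prop :=
  Uᵀ * U = 1 ∧ Wᵀ * W = 1 ∧ Uᵀ * W = 0 ∧ U * Uᵀ + W * Wᵀ = 1

set_option maxHeartbeats 1000000

open scoped Matrix.Norms.L2Operator

lemma specNorm_eq {m n : Type*} [Fintype m] [Fintype n] [DecidableEq n]
    (A : Matrix m n ℝ) : specNorm A = ‖A‖ := rfl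


lemma real_conjT {m n : Type*} (A : Matrix m n ℝ) : Aᴴ = Aᵀ := by
  ext i j; simp [conjTranspose_apply]

lemma l2_transpose' {m n : Type*} [Fintype m] [Fintype n] [DecidableEq n] [DecidableEq m]
    (A : Matrix m n ℝ) : ‖Aᵀ‖ = ‖A‖ := by
  have hc : Aᴴ = Aᵀ := by ext i j; simp [conjTranspose_apply]
  rw [← hc]; exact Matrix.l2_opNorm_conjTranspose A

lemma l2_sq {m n : Type*} [Fintype m] [Fintype n] [DecidableEq n] [DecidableEq m]
    (A : Matrix m n ℝ) : ‖Aᵀ * A‖ = ‖A‖ * ‖A‖ := by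
  rw [← real_conjT]; exact Matrix.l2_opNorm_conjTranspose_mul_self A


lemma eucl_norm_eq {k : Type*} [Fintype k] (y : EuclideanSpace ℝ k) :
    ‖y‖ = Real.sqrt (∑ i, (y i)^2) := by
  rw [EuclideanSpace.norm_eq]; congr 1; exact Finset.sum_congr rfl fun i _ => by
    rw [Real.norm_eq_abs, sq_abs]

lemma l2_diag_le {k : Type*} [Fintype k] [DecidableEq k] (d : k → ℝ) (c : ℝ) (hc : 0 ≤ c)
    (h : ∀ i, |d i| ≤ c) : ‖Matrix.diagonal d‖ ≤ c := by
  rw [Matrix.l2_opNorm_def]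
  refine ContinuousLinearMap.opNorm_le_bound _ hc fun x => ?_
  have happ : ∀ i, ((Matrix.toEuclideanLin (Matrix.diagonal d)).toContinuousLinearMap x) i
      = d i * x i := by
    intro i
    simp [Matrix.toEuclideanLin, Matrix.mulVec, dotProduct, Matrix.diagonal]
  calc ‖(Matrix.toEuclideanLin (Matrix.diagonal d)).toContinuousLinearMap x‖
      = Real.sqrt (∑ i, (d i * x i)^2) := by
        rw [eucl_norm_eq]; congr 1; exact Finset.sum_congr rfl fun i _ => by rw [happ]
    _ ≤ Real.sqrt (∑ i, c^2 * (x i)^2) := by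
        apply Real.sqrt_le_sqrt; apply Finset.sum_le_sum; intro i _
        rw [mul_pow]
        have h2 : d i ^ 2 ≤ c ^ 2 := by
          rw [← sq_abs]; exact pow_le_pow_left₀ (abs_nonneg _) (h i) 2
        exact mul_le_mul_of_nonneg_right h2 (sq_nonneg _)
    _ = c * ‖x‖ := by
        rw [← Finset.mul_sum, Real.sqrt_mul (by positivity), eucl_norm_eq, Real.sqrt_sq hc]

lemma eucl_coord_le {k : Type*} [Fintype k] (y : EuclideanSpace ℝ k) (i : k) :
    |y i| ≤ ‖y‖ := by
  rw [eucl_norm_eq, ← Real.sqrt_sq_eq_abs]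
  apply Real.sqrt_le_sqrt
  exact Finset.single_le_sum (fun j _ => sq_nonneg (y j)) (Finset.mem_univ i)

lemma l2_diag_ge {k : Type*} [Fintype k] [DecidableEq k] (d : k → ℝ) (i : k) :
    |d i| ≤ ‖Matrix.diagonal d‖ := by
  have h := Matrix.l2_opNorm_mulVec (Matrix.diagonal d) (EuclideanSpace.single i 1)
  have h1 : ‖(EuclideanSpace.single i (1:ℝ))‖ = 1 := by simp
  rw [h1, mul_one] at h
  refine le_trans ?_ h
  have h2 : ((EuclideanSpace.equiv k ℝ).symm <| Matrix.diagonal d *ᵥ (EuclideanSpace.single i 1)) i = d i := by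
    show (Matrix.diagonal d *ᵥ (EuclideanSpace.single i 1)) i = d i
    simp [Matrix.mulVec, dotProduct, Matrix.diagonal_apply, EuclideanSpace.single_apply]
  calc |d i| = |((EuclideanSpace.equiv k ℝ).symm <| Matrix.diagonal d *ᵥ (EuclideanSpace.single i 1)) i| := by rw [h2]
    _ ≤ _ := eucl_coord_le _ i


lemma l2_one_le {k : Type*} [Fintype k] [DecidableEq k] :
    ‖(1 : Matrix k k ℝ)‖ ≤ 1 := by
  rw [Matrix.cstar_norm_def, _root_.map_one]
  exact ContinuousLinearMap.norm_id_le

lemma unitary_norm_le {k : Type*} [Fintype k] [DecidableEq k] (W : Matrix k k ℝ)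
    (h1 : Wᵀ * W = 1) : ‖W‖ ≤ 1 := by
  have hc : Wᴴ = Wᵀ := by ext i j; simp [conjTranspose_apply]
  have h := Matrix.l2_opNorm_conjTranspose_mul_self W
  rw [hc, h1] at h
  nlinarith [norm_nonneg W, l2_one_le (k := k)]

lemma l2_unitary_left {k m : Type*} [Fintype k] [Fintype m] [DecidableEq k] [DecidableEq m]
    (W : Matrix k k ℝ) (h1 : Wᵀ * W = 1) (h2 : W * Wᵀ = 1) (X : Matrix k m ℝ) :
    ‖W * X‖ = ‖X‖ := by
  refine le_antisymm ?_ ?_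
  · calc ‖W * X‖ ≤ ‖W‖ * ‖X‖ := Matrix.l2_opNorm_mul W X
      _ ≤ 1 * ‖X‖ := by
        exact mul_le_mul_of_nonneg_right (unitary_norm_le W h1) (norm_nonneg X)
      _ = ‖X‖ := one_mul _
  · have hX : X = Wᵀ * (W * X) := by rw [← Matrix.mul_assoc, h1, Matrix.one_mul]
    calc ‖X‖ = ‖Wᵀ * (W * X)‖ := by rw [← hX]
      _ ≤ ‖Wᵀ‖ * ‖W * X‖ := Matrix.l2_opNorm_mul _ _
      _ ≤ 1 * ‖W * X‖ := by
        refine mul_le_mul_of_nonneg_right (unitary_norm_le Wᵀ ?_) (norm_nonneg _)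
        rwa [Matrix.transpose_transpose]
      _ = ‖W * X‖ := one_mul _

lemma l2_unitary_right {k m : Type*} [Fintype k] [Fintype m] [DecidableEq k] [DecidableEq m]
    (W : Matrix k k ℝ) (h1 : Wᵀ * W = 1) (h2 : W * Wᵀ = 1) (X : Matrix m k ℝ) :
    ‖X * W‖ = ‖X‖ := by
  rw [← l2_transpose' (X * W), Matrix.transpose_mul, l2_unitary_left Wᵀ (by rwa [Matrix.transpose_transpose]) (by rwa [Matrix.transpose_transpose]), l2_transpose']



lemma herm_norm_spectrum {k : Type*} [Fintype k] [DecidableEq k] [Nonempty k]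
    (P : Matrix k k ℝ) (hP : P.IsHermitian) :
    ‖P‖ = sSup ((fun x => |x|) '' spectrum ℝ P) := by
  set U : Matrix k k ℝ := (hP.eigenvectorUnitary : Matrix k k ℝ) with hUdef
  have hmem := hP.eigenvectorUnitary.2
  rw [Unitary.mem_iff] at hmem
  have hstar : star U = Uᵀ := by
    rw [Matrix.star_eq_conjTranspose]; ext i j; simp [conjTranspose_apply]
  have h1 : Uᵀ * U = 1 := by rw [← hstar]; exact hmem.1
  have h2 : U * Uᵀ = 1 := by rw [← hstar]; exact hmem.2
  have hspec := hP.spectral_theorem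
  rw [RCLike.ofReal_real_eq_id] at hspec
  simp only [Function.id_comp] at hspec
  have hnorm : ‖P‖ = ‖Matrix.diagonal hP.eigenvalues‖ := by
    conv_lhs => rw [hspec]
    rw [Unitary.conjStarAlgAut_apply, ← hUdef, hstar, Matrix.mul_assoc]
    rw [l2_unitary_left U h1 h2, l2_unitary_right Uᵀ (by rwa [Matrix.transpose_transpose]) (by rwa [Matrix.transpose_transpose])]
  have hsp : spectrum ℝ P = Set.range hP.eigenvalues := by
    conv_lhs => rw [hspec]
    rw [← spectrum_diagonal hP.eigenvalues]
    exact AlgEquiv.spectrum_eq _ _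
  rw [hnorm, hsp]
  have himg : (fun x => |x|) '' Set.range hP.eigenvalues
      = (fun i => |hP.eigenvalues i|) '' (Finset.univ : Finset k) := by
    rw [Finset.coe_univ, Set.image_univ, ← Set.range_comp]; rfl
  rw [himg, ← Finset.sup'_eq_csSup_image _ Finset.univ_nonempty]
  refine le_antisymm ?_ ?_
  · refine l2_diag_le _ _ ?_ (fun i => Finset.le_sup' (fun i => |hP.eigenvalues i|) (Finset.mem_univ i))
    obtain ⟨i⟩ := (inferInstance : Nonempty k)
    exact le_trans (abs_nonneg _) (Finset.le_sup' (fun i => |hP.eigenvalues i|) (Finset.mem_univ i))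
  · exact Finset.sup'_le _ _ fun i _ => l2_diag_ge _ i



lemma spec_mul_comm {k : Type*} [Fintype k] [DecidableEq k] (C : Matrix k k ℝ) :
    spectrum ℝ (Cᵀ * C) = spectrum ℝ (C * Cᵀ) := by
  ext x
  by_cases hx : x = 0
  · subst hx
    rw [spectrum.zero_mem_iff, spectrum.zero_mem_iff,
      Matrix.isUnit_iff_isUnit_det, Matrix.isUnit_iff_isUnit_det,
      Matrix.det_mul, Matrix.det_mul, Matrix.det_transpose, mul_comm]
  · have h := Set.ext_iff.mp (spectrum.nonzero_mul_comm (𝕜 := ℝ) Cᵀ C) x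
    simp only [Set.mem_diff, Set.mem_singleton_iff, hx, not_false_iff, and_true] at h
    exact h

lemma mem_spec_one_sub {k : Type*} [Fintype k] [DecidableEq k] (X : Matrix k k ℝ) (x : ℝ) :
    x ∈ spectrum ℝ (1 - X) ↔ (1 - x) ∈ spectrum ℝ X := by
  rw [spectrum.mem_iff, spectrum.mem_iff]
  have : algebraMap ℝ (Matrix k k ℝ) x - (1 - X)
      = -(algebraMap ℝ (Matrix k k ℝ) (1 - x) - X) := by
    rw [map_sub, _root_.map_one]; abel
  rw [this, IsUnit.neg_iff]

lemma spec_one_sub_eq {k : Type*} [Fintype k] [DecidableEq k] (X Y : Matrix k k ℝ)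
    (h : spectrum ℝ X = spectrum ℝ Y) :
    spectrum ℝ (1 - X) = spectrum ℝ (1 - Y) := by
  ext x; rw [mem_spec_one_sub, mem_spec_one_sub, h]

lemma one_sub_herm {k : Type*} [Fintype k] [DecidableEq k] (D : Matrix k k ℝ) :
    (1 - Dᵀ * D).IsHermitian := by
  show (1 - Dᵀ * D)ᴴ = _
  have hc : ∀ (A : Matrix k k ℝ), Aᴴ = Aᵀ := fun A => by ext i j; simp [conjTranspose_apply]
  rw [hc, Matrix.transpose_sub, Matrix.transpose_one, Matrix.transpose_mul,
    Matrix.transpose_transpose]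

lemma key_norm_eq {k : Type*} [Fintype k] [DecidableEq k] [Nonempty k] (C : Matrix k k ℝ) :
    ‖1 - Cᵀ * C‖ = ‖1 - C * Cᵀ‖ := by
  have h2 : (1 - C * Cᵀ).IsHermitian := by
    have := one_sub_herm Cᵀ; rwa [Matrix.transpose_transpose] at this
  rw [herm_norm_spectrum _ (one_sub_herm C), herm_norm_spectrum _ h2,
    spec_one_sub_eq _ _ (spec_mul_comm C)]

lemma mul_contract_one {a b c : Type*} [Fintype a] [Fintype b] [Fintype c] [DecidableEq a]
    (P : Matrix a b ℝ) (Q : Matrix b a ℝ) (h : P * Q = 1) (R : Matrix a c ℝ) :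
    P * (Q * R) = R := by rw [← Matrix.mul_assoc, h, Matrix.one_mul]

lemma mul_contract_zero {a b c d : Type*} [Fintype a] [Fintype b] [Fintype c] [Fintype d]
    (P : Matrix a b ℝ) (Q : Matrix b c ℝ) (h : P * Q = 0) (R : Matrix c d ℝ) :
    P * (Q * R) = 0 := by rw [← Matrix.mul_assoc, h, Matrix.zero_mul]

lemma arith0 (lam lamh : ℝ) (h0 : 0 ≤ lamh) (hg : lamh < lam) : 0 < lam ^ 2 - lamh ^ 2 := by
  nlinarith

lemma arith1 (lam lamh e1 e2 t s : ℝ) (hlam : 0 < lam) (hlamh : 0 ≤ lamh)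
    (h1 : lam * t ≤ lamh * s + e2) (h2 : lam * s ≤ t * lamh + e1) :
    t * (lam ^ 2 - lamh ^ 2) ≤ lamh * e1 + lam * e2 := by
  nlinarith [mul_le_mul_of_nonneg_left h2 hlamh, mul_le_mul_of_nonneg_left h1 (le_of_lt hlam)]

lemma arith2 (lam lamh e1 e2 m : ℝ) (h0 : 0 ≤ lamh) (hg : lamh < lam)
    (h1 : e1 ≤ m) (h2 : e2 ≤ m) :
    (lamh * e1 + lam * e2) * (lam - lamh) ≤ m * (lam ^ 2 - lamh ^ 2) := by
  nlinarith [mul_nonneg (mul_nonneg (sub_nonneg.mpr (le_of_lt hg)) h0) (sub_nonneg.mpr h1),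
    mul_nonneg (mul_nonneg (sub_nonneg.mpr (le_of_lt hg)) (le_trans h0 (le_of_lt hg))) (sub_nonneg.mpr h2)]

theorem stmt4 (d₁ d₂ r : ℕ) (hr0 : 0 < r) (hr₁ : r ≤ d₁) (hr₂ : r ≤ d₂)
    (Mmat Δ : Matrix (Fin d₁) (Fin d₂) ℝ)
    (U : Matrix (Fin d₁) (Fin r) ℝ) (Uperp : Matrix (Fin d₁) (Fin (d₁ - r)) ℝ)
    (V : Matrix (Fin d₂) (Fin r) ℝ) (Vperp : Matrix (Fin d₂) (Fin (d₂ - r)) ℝ)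
    (hU : OrthoPair U Uperp) (hV : OrthoPair V Vperp)
    (S1 : Fin r → ℝ) (hS1 : ∀ i, 0 ≤ S1 i)
    (S2 : Matrix (Fin (d₁ - r)) (Fin (d₂ - r)) ℝ)
    (hMsplit : Mmat = U * Matrix.diagonal S1 * Vᵀ + Uperp * S2 * Vperpᵀ)
    (lam : ℝ) (hlam_le : ∀ i, lam ≤ S1 i) (hlam_mem : ∃ i, S1 i = lam)
    (hS2 : specNorm S2 ≤ lam)
    (Uh : Matrix (Fin d₁) (Fin r) ℝ) (Uhperp : Matrix (Fin d₁) (Fin (d₁ - r)) ℝ)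
    (Vh : Matrix (Fin d₂) (Fin r) ℝ) (Vhperp : Matrix (Fin d₂) (Fin (d₂ - r)) ℝ)
    (hUh : OrthoPair Uh Uhperp) (hVh : OrthoPair Vh Vhperp)
    (Sh1 : Fin r → ℝ) (hSh1 : ∀ i, 0 ≤ Sh1 i)
    (Sh2 : Matrix (Fin (d₁ - r)) (Fin (d₂ - r)) ℝ)
    (hMh : Mmat + Δ = Uh * Matrix.diagonal Sh1 * Vhᵀ + Uhperp * Sh2 * Vhperpᵀ)
    (lamh : ℝ) (hlamh_le : ∀ i, lamh ≤ Sh1 i) (hlamh : specNorm Sh2 = lamh)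
    (ε₁ ε₂ : ℝ)
    (hε₁ : ε₁ = specNorm (Uᵀ * Δ * Vhperp)) (hε₂ : ε₂ = specNorm (Uhperpᵀ * Δ * V))
    (hgap : lamh < lam) :
    specNorm (Uperpᵀ * Uh) ≤ (lamh * ε₁ + lam * ε₂) / (lam ^ 2 - lamh ^ 2) ∧
      (lamh * ε₁ + lam * ε₂) / (lam ^ 2 - lamh ^ 2) ≤ max ε₁ ε₂ / (lam - lamh) := by
  have : Nonempty (Fin r) := ⟨⟨0, hr0⟩⟩
  obtain ⟨hU1, hU2, hU3, hU4⟩ := hU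
  obtain ⟨hV1, hV2, hV3, hV4⟩ := hV
  obtain ⟨hUh1, hUh2, hUh3, hUh4⟩ := hUh
  obtain ⟨hVh1, hVh2, hVh3, hVh4⟩ := hVh
  have hlamh0 : 0 ≤ lamh := by rw [← hlamh, specNorm_eq]; exact norm_nonneg _
  have hlam0 : 0 < lam := lt_of_le_of_lt hlamh0 hgap
  have hε₁0 : 0 ≤ ε₁ := by rw [hε₁, specNorm_eq]; exact norm_nonneg _
  have hε₂0 : 0 ≤ ε₂ := by rw [hε₂, specNorm_eq]; exact norm_nonneg _
  -- transposed orthogonality facts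
  have hUh3' : Uhperpᵀ * Uh = 0 := by
    have := congrArg Matrix.transpose hUh3
    simpa [Matrix.transpose_mul] using this
  have hV3' : Vperpᵀ * V = 0 := by
    have := congrArg Matrix.transpose hV3
    simpa [Matrix.transpose_mul] using this
  -- the two key equations
  have key := hMh
  rw [hMsplit] at key
  have eq1 : Uᵀ * (Uhperp * Sh2) =
      Matrix.diagonal S1 * (Vᵀ * Vhperp) + Uᵀ * (Δ * Vhperp) := by
    have h := congrArg (fun X => Uᵀ * (X * Vhperp)) key
    simp only [Matrix.add_mul, Matrix.mul_add, Matrix.mul_assoc] at h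
    rw [hVh3, hVh2] at h
    rw [mul_contract_one Uᵀ U hU1, mul_contract_zero Uᵀ Uperp hU3] at h
    simpa [Matrix.mul_one] using h.symm
  have eq2 : Sh2 * (Vhperpᵀ * V) = Uhperpᵀ * (U * Matrix.diagonal S1) + Uhperpᵀ * (Δ * V) := by
    have h := congrArg (fun X => Uhperpᵀ * (X * V)) key
    simp only [Matrix.add_mul, Matrix.mul_add, Matrix.mul_assoc] at h
    rw [hV1, hV3'] at h
    rw [mul_contract_zero Uhperpᵀ Uh hUh3', mul_contract_one Uhperpᵀ Uhperp hUh2] at h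
    simpa [Matrix.mul_one] using h.symm
  set Dinv : Matrix (Fin r) (Fin r) ℝ := Matrix.diagonal (fun i => (S1 i)⁻¹) with hDinv
  have hS1pos : ∀ i, 0 < S1 i := fun i => lt_of_lt_of_le hlam0 (hlam_le i)
  have hinv : Dinv * Matrix.diagonal S1 = 1 := by
    rw [hDinv, Matrix.diagonal_mul_diagonal]
    have : (fun i => (S1 i)⁻¹ * S1 i) = fun _ => 1 :=
      funext fun i => inv_mul_cancel₀ (ne_of_gt (hS1pos i))
    rw [this, Matrix.diagonal_one]
  have hinv' : Matrix.diagonal S1 * Dinv = 1 := by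
    rw [hDinv, Matrix.diagonal_mul_diagonal]
    have : (fun i => S1 i * (S1 i)⁻¹) = fun _ => 1 :=
      funext fun i => mul_inv_cancel₀ (ne_of_gt (hS1pos i))
    rw [this, Matrix.diagonal_one]
  have hDinvnorm : ‖Dinv‖ ≤ lam⁻¹ := by
    refine l2_diag_le _ _ (by positivity) (fun i => ?_)
    rw [abs_of_nonneg (le_of_lt (inv_pos.mpr (hS1pos i)))]
    exact inv_anti₀ hlam0 (hlam_le i)
  -- solved equations
  have eqS : Vᵀ * Vhperp = Dinv * (Uᵀ * (Uhperp * Sh2)) - Dinv * (Uᵀ * (Δ * Vhperp)) := by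
    rw [eq1, Matrix.mul_add, mul_contract_one Dinv (Matrix.diagonal S1) hinv, add_sub_cancel_right]
  have eqT : Uhperpᵀ * U = Sh2 * (Vhperpᵀ * V) * Dinv - Uhperpᵀ * (Δ * V) * Dinv := by
    have h1 : Uhperpᵀ * U = (Uhperpᵀ * (U * Matrix.diagonal S1)) * Dinv := by
      rw [← Matrix.mul_assoc, Matrix.mul_assoc _ (Matrix.diagonal S1) Dinv, hinv', Matrix.mul_one]
    rw [h1, eq2, Matrix.add_mul, add_sub_cancel_right]
  -- norms
  set t := ‖Uᵀ * Uhperp‖ with ht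
  set s := ‖Vᵀ * Vhperp‖ with hs
  have ht0 : 0 ≤ t := norm_nonneg _
  have hs0 : 0 ≤ s := norm_nonneg _
  have hSh2 : ‖Sh2‖ = lamh := by rw [← hlamh, specNorm_eq]
  have hE1 : ‖Uᵀ * (Δ * Vhperp)‖ = ε₁ := by rw [hε₁, specNorm_eq, Matrix.mul_assoc]
  have hE2 : ‖Uhperpᵀ * (Δ * V)‖ = ε₂ := by rw [hε₂, specNorm_eq, Matrix.mul_assoc]
  have hsb : s ≤ lam⁻¹ * (t * lamh + ε₁) := by
    rw [hs, eqS]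
    have b1 : ‖Dinv * (Uᵀ * (Uhperp * Sh2))‖ ≤ lam⁻¹ * (t * lamh) := by
      calc ‖Dinv * (Uᵀ * (Uhperp * Sh2))‖ ≤ ‖Dinv‖ * ‖Uᵀ * (Uhperp * Sh2)‖ :=
            Matrix.l2_opNorm_mul _ _
        _ ≤ lam⁻¹ * (t * lamh) := by
            have : ‖Uᵀ * (Uhperp * Sh2)‖ ≤ t * lamh := by
              rw [← Matrix.mul_assoc]
              calc ‖Uᵀ * Uhperp * Sh2‖ ≤ ‖Uᵀ * Uhperp‖ * ‖Sh2‖ := Matrix.l2_opNorm_mul _ _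
                _ = t * lamh := by rw [hSh2, ht]
            have h0 : (0:ℝ) ≤ lam⁻¹ := by positivity
            exact mul_le_mul hDinvnorm this (norm_nonneg _) h0
    have b2 : ‖Dinv * (Uᵀ * (Δ * Vhperp))‖ ≤ lam⁻¹ * ε₁ := by
      calc ‖Dinv * (Uᵀ * (Δ * Vhperp))‖ ≤ ‖Dinv‖ * ‖Uᵀ * (Δ * Vhperp)‖ :=
            Matrix.l2_opNorm_mul _ _
        _ ≤ lam⁻¹ * ε₁ := by
            rw [hE1]
            exact mul_le_mul_of_nonneg_right hDinvnorm hε₁0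
    calc ‖Dinv * (Uᵀ * (Uhperp * Sh2)) - Dinv * (Uᵀ * (Δ * Vhperp))‖
        ≤ ‖Dinv * (Uᵀ * (Uhperp * Sh2))‖ + ‖Dinv * (Uᵀ * (Δ * Vhperp))‖ := norm_sub_le _ _
      _ ≤ lam⁻¹ * (t * lamh) + lam⁻¹ * ε₁ := add_le_add b1 b2
      _ = lam⁻¹ * (t * lamh + ε₁) := by ring
  have htb : t ≤ lam⁻¹ * (lamh * s + ε₂) := by
    have htt : t = ‖Uhperpᵀ * U‖ := by
      rw [ht, ← l2_transpose' (Uᵀ * Uhperp)]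
      congr 1
      rw [Matrix.transpose_mul, Matrix.transpose_transpose]
    have hsvt : ‖Vhperpᵀ * V‖ = s := by
      rw [hs, ← l2_transpose' (Vᵀ * Vhperp)]
      congr 1
      rw [Matrix.transpose_mul, Matrix.transpose_transpose]
    rw [htt, eqT]
    have b1 : ‖Sh2 * (Vhperpᵀ * V) * Dinv‖ ≤ lamh * s * lam⁻¹ := by
      calc ‖Sh2 * (Vhperpᵀ * V) * Dinv‖ ≤ ‖Sh2 * (Vhperpᵀ * V)‖ * ‖Dinv‖ :=
            Matrix.l2_opNorm_mul _ _
        _ ≤ lamh * s * lam⁻¹ := by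
            refine mul_le_mul ?_ hDinvnorm (norm_nonneg _) (by positivity)
            calc ‖Sh2 * (Vhperpᵀ * V)‖ ≤ ‖Sh2‖ * ‖Vhperpᵀ * V‖ := Matrix.l2_opNorm_mul _ _
              _ = lamh * s := by rw [hSh2, hsvt]
    have b2 : ‖Uhperpᵀ * (Δ * V) * Dinv‖ ≤ ε₂ * lam⁻¹ := by
      calc ‖Uhperpᵀ * (Δ * V) * Dinv‖ ≤ ‖Uhperpᵀ * (Δ * V)‖ * ‖Dinv‖ := Matrix.l2_opNorm_mul _ _
        _ ≤ ε₂ * lam⁻¹ := by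
            rw [hE2]
            exact mul_le_mul_of_nonneg_left hDinvnorm hε₂0
    calc ‖Sh2 * (Vhperpᵀ * V) * Dinv - Uhperpᵀ * (Δ * V) * Dinv‖
        ≤ ‖Sh2 * (Vhperpᵀ * V) * Dinv‖ + ‖Uhperpᵀ * (Δ * V) * Dinv‖ := norm_sub_le _ _
      _ ≤ lamh * s * lam⁻¹ + ε₂ * lam⁻¹ := add_le_add b1 b2
      _ = lam⁻¹ * (lamh * s + ε₂) := by ring
  -- numeric combination
  have hnum : t * (lam ^ 2 - lamh ^ 2) ≤ lamh * ε₁ + lam * ε₂ := by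
    have hl : lam ≠ 0 := ne_of_gt hlam0
    have h1 : lam * t ≤ lamh * s + ε₂ := by
      have := mul_le_mul_of_nonneg_left htb (le_of_lt hlam0)
      rwa [← mul_assoc, mul_inv_cancel₀ hl, one_mul] at this
    have h2 : lam * s ≤ t * lamh + ε₁ := by
      have := mul_le_mul_of_nonneg_left hsb (le_of_lt hlam0)
      rwa [← mul_assoc, mul_inv_cancel₀ hl, one_mul] at this
    exact arith1 lam lamh ε₁ ε₂ t s hlam0 hlamh0 h1 h2
  have hd2 : (0:ℝ) < lam ^ 2 - lamh ^ 2 := arith0 lam lamh hlamh0 hgap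
  have hd1 : (0:ℝ) < lam - lamh := by linarith
  -- sin theta equality
  have hsin : ‖Uperpᵀ * Uh‖ = t := by
    set C := Uᵀ * Uh with hC
    have hsub1 : Uperp * Uperpᵀ = 1 - U * Uᵀ := eq_sub_of_add_eq' hU4
    have hsub2 : Uhperp * Uhperpᵀ = 1 - Uh * Uhᵀ := eq_sub_of_add_eq' hUh4
    have hAA : (Uperpᵀ * Uh)ᵀ * (Uperpᵀ * Uh) = 1 - Cᵀ * C := by
      rw [Matrix.transpose_mul, Matrix.transpose_transpose]
      calc Uhᵀ * Uperp * (Uperpᵀ * Uh) = Uhᵀ * (Uperp * Uperpᵀ) * Uh := by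
            rw [Matrix.mul_assoc, Matrix.mul_assoc, Matrix.mul_assoc]
        _ = Uhᵀ * (1 - U * Uᵀ) * Uh := by rw [hsub1]
        _ = 1 - Cᵀ * C := by
            rw [Matrix.mul_sub, Matrix.mul_one, Matrix.sub_mul, hUh1, hC,
              Matrix.transpose_mul, Matrix.transpose_transpose]
            congr 1
            rw [Matrix.mul_assoc, Matrix.mul_assoc, Matrix.mul_assoc]
    have hTT : (Uᵀ * Uhperp) * (Uᵀ * Uhperp)ᵀ = 1 - C * Cᵀ := by
      rw [Matrix.transpose_mul, Matrix.transpose_transpose]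
      calc Uᵀ * Uhperp * (Uhperpᵀ * U) = Uᵀ * (Uhperp * Uhperpᵀ) * U := by
            rw [Matrix.mul_assoc, Matrix.mul_assoc, Matrix.mul_assoc]
        _ = Uᵀ * (1 - Uh * Uhᵀ) * U := by rw [hsub2]
        _ = 1 - C * Cᵀ := by
            rw [Matrix.mul_sub, Matrix.mul_one, Matrix.sub_mul, hU1, hC,
              Matrix.transpose_mul, Matrix.transpose_transpose]
            congr 1
            rw [Matrix.mul_assoc, Matrix.mul_assoc, Matrix.mul_assoc]
    have hsq : ‖Uperpᵀ * Uh‖ * ‖Uperpᵀ * Uh‖ = t * t := by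
      rw [← l2_sq (Uperpᵀ * Uh), hAA, key_norm_eq C, ← hTT]
      have := l2_sq (Uᵀ * Uhperp)ᵀ
      rw [Matrix.transpose_transpose, l2_transpose'] at this
      rw [this, ht]
    have h1 : ‖Uperpᵀ * Uh‖ = Real.sqrt (t * t) := by
      rw [← hsq, Real.sqrt_mul_self (norm_nonneg _)]
    rw [h1, Real.sqrt_mul_self ht0]
  constructor
  · rw [specNorm_eq, hsin, le_div_iff₀ hd2]
    exact hnum
  · rw [div_le_div_iff₀ hd2 hd1]
    exact arith2 lam lamh ε₁ ε₂ _ hlamh0 hgap (le_max_left _ _) (le_max_right _ _)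
end
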